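/- Let λ > 0, C > 1 with λ = C·λ_thres where λ_thres = √(mgR³I₃α)(1+α)²/√(1+α-γ), and let β = 2mgR³αI₃γ²(γ+α²-1), with m,g,R,I₃ > 0, 0 < α < 1, 1-α² < γ < 1. If b satisfies αγλ/(1+α) < b < αγλ/(1-α), then ε := 2β/b² < 4/C² · (γ+α²-1)(1+α-γ)/(α²(1+α)²) < 1/C² < 1. -/

import Mathlib

set_option maxHeartbeats 1000000 in
theorem stmt_7 (m grav R I₃ α γ lam C b : ℝ)
    (hm : 0 < m) (hg : 0 < grav) (hR : 0 < R) (hI₃ : 0 < I₃)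
    (hα : 0 < α) (hα1 : α < 1) (hγl : 1 - α^2 < γ) (hγu : γ < 1)
    (hC : 1 < C)
    (hlam : lam = C * (Real.sqrt (m*grav*R^3*I₃*α) * (1+α)^2 / Real.sqrt (1 + α - γ)))
    (hlampos : 0 < lam)
    (hb1 : α*γ*lam / (1+α) < b) (hb2 : b < α*γ*lam / (1-α)) :
    2*(2*m*grav*R^3*α*I₃*γ^2*(γ + α^2 - 1)) / b^2
        < 4/C^2 * ((γ + α^2 - 1)*(1 + α - γ) / (α^2*(1+α)^2)) ∧
      4/C^2 * ((γ + α^2 - 1)*(1 + α - γ) / (α^2*(1+α)^2)) < 1/C^2 ∧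
      1/C^2 < 1 := by
  have hC0 : 0 < C := lt_trans one_pos hC
  have hA : 0 < m*grav*R^3*I₃*α := by positivity
  have hB : 0 < 1 + α - γ := by linarith
  have hγ0 : 0 < γ := by nlinarith
  have hX : 0 < γ + α^2 - 1 := by linarith
  have h1α : 0 < 1 + α := by linarith
  have hlamsq : lam^2 = C^2 * (m*grav*R^3*I₃*α) * (1+α)^4 / (1+α-γ) := by
    rw [hlam]
    rw [show (C * (Real.sqrt (m*grav*R^3*I₃*α) * (1+α)^2 / Real.sqrt (1 + α - γ)))^2
        = C^2 * (Real.sqrt (m*grav*R^3*I₃*α))^2 * (1+α)^4 / (Real.sqrt (1 + α - γ))^2 by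
      field_simp]
    rw [Real.sq_sqrt hA.le, Real.sq_sqrt hB.le]
  have hM0 : 0 < α*γ*lam / (1+α) := by positivity
  have hb0 : 0 < b := lt_trans hM0 hb1
  have hbsq : (α*γ*lam / (1+α))^2 < b^2 := by
    exact pow_lt_pow_left₀ hb1 hM0.le (by norm_num)
  have h1αne : (1+α) ≠ 0 := ne_of_gt h1α
  have hMsq : (α*γ*lam / (1+α))^2 = α^2*γ^2*lam^2/(1+α)^2 := by
    field_simp
  -- value of the lower bound squared
  have hval : 2*(2*m*grav*R^3*α*I₃*γ^2*(γ + α^2 - 1)) / ((α*γ*lam / (1+α))^2)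
      = 4/C^2 * ((γ + α^2 - 1)*(1 + α - γ) / (α^2*(1+α)^2)) := by
    rw [hMsq, hlamsq]
    field_simp
    ring
  have hN : 0 < 2*(2*m*grav*R^3*α*I₃*γ^2*(γ + α^2 - 1)) := by positivity
  refine ⟨?_, ?_, ?_⟩
  · calc 2*(2*m*grav*R^3*α*I₃*γ^2*(γ + α^2 - 1)) / b^2
        < 2*(2*m*grav*R^3*α*I₃*γ^2*(γ + α^2 - 1)) / ((α*γ*lam / (1+α))^2) :=
          div_lt_div_of_pos_left hN (by positivity) hbsq
      _ = _ := hval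
  · have hXltB : γ + α^2 - 1 < 1 + α - γ := by
      nlinarith [mul_pos hα (sub_pos.mpr hα1)]
    have hd : (0:ℝ) < (1 + α - γ) - (γ + α^2 - 1) := by linarith
    have key : 4*((γ + α^2 - 1)*(1 + α - γ)) < α^2*(1+α)^2 := by
      nlinarith [mul_pos hd hd]
    have hC2 : 0 < C^2 := by positivity
    have hD : 0 < α^2*(1+α)^2 := by positivity
    have h1 : (γ + α^2 - 1)*(1 + α - γ) / (α^2*(1+α)^2) < 1/4 := by
      rw [div_lt_div_iff₀ hD (by norm_num)]
      linarith [key]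
    calc 4/C^2 * ((γ + α^2 - 1)*(1 + α - γ) / (α^2*(1+α)^2))
        < 4/C^2 * (1/4) := by
          exact mul_lt_mul_of_pos_left h1 (by positivity)
      _ = 1/C^2 := by ring
  · have hC2' : (0:ℝ) < C^2 := by positivity
    have hC2 : (1:ℝ) < C^2 := by nlinarith
    exact (div_lt_one hC2').mpr hC2
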